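/- Let t ≥ 0. For n ≥ 0 let c_n denote the number of Deutsch paths of length n starting at height t, ending at any nonnegative height, all of whose heights h_i satisfy h_i ≥ 0 (no upper bound). Then in the formal power series ring ℤ[[v]], the series Σ_{n≥0} c_n · vⁿ · ((1+v+v²)⁻¹)ⁿ equals (1+v)^t · (1+v+v²). -/

import Mathlib

open PowerSeries Finset

/-- The power series `1 + v + v²` over `ℤ`. -/
noncomputable def q : PowerSeries ℤ := 1 + X + X ^ 2

/-- `v · (1+v+v²)⁻¹` as a formal power series over `ℤ`. -/
noncomputable def w : PowerSeries ℤ := X * PowerSeries.invOfUnit q 1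

/-- `p` is a Deutsch path of length `n`: each step is either an up-step `+1`
or a down-step of arbitrary (negative) size. -/
def IsDeutschPath (n : ℕ) (p : Fin (n + 1) → ℤ) : Prop :=
  ∀ i : Fin n, p i.succ - p i.castSucc = 1 ∨ p i.succ - p i.castSucc ≤ -1

/-- Number of Deutsch paths of length `n` from height `a` to height `b`
all of whose heights satisfy the predicate `P`. -/
noncomputable def pathCount (n : ℕ) (a b : ℤ) (P : ℤ → Prop) : ℕ :=
  Nat.card {p : Fin (n + 1) → ℤ //
    p 0 = a ∧ p (Fin.last n) = b ∧ (∀ i, P (p i)) ∧ IsDeutschPath n p}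

/-- The power series `Σ_{n≥0} a_n · vⁿ · ((1+v+v²)⁻¹)ⁿ`.  Since the `n`-th
summand has order `≥ n`, its coefficient of `v^N` is the (finite) sum of the
corresponding coefficients of the summands with `n ≤ N`. -/
noncomputable def series (a : ℕ → ℕ) : PowerSeries ℤ :=
  PowerSeries.mk fun N => ∑ n ∈ range (N + 1), (a n : ℤ) * coeff N (w ^ n)

/-- Number of Deutsch paths of length `n` starting at height `a`, ending
anywhere, all of whose heights are nonnegative. -/
noncomputable def pathCountAnyEnd (n : ℕ) (a : ℤ) : ℕ :=
  Nat.card {p : Fin (n + 1) → ℤ //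
    p 0 = a ∧ (∀ i, 0 ≤ p i) ∧ IsDeutschPath n p}

noncomputable def u : PowerSeries ℤ := PowerSeries.invOfUnit q 1

lemma q_mul_u : q * u = 1 := by
  apply PowerSeries.mul_invOfUnit
  simp [q, map_add, map_pow]

lemma coeff_w_pow_eq_zero {l m : ℕ} (h : l < m) : coeff l (w ^ m) = 0 := by
  have hd : (X : PowerSeries ℤ) ^ m ∣ w ^ m := pow_dvd_pow_of_dvd ⟨u, rfl⟩ m
  exact (PowerSeries.X_pow_dvd_iff.mp hd) l h

lemma series_shift (a b : ℕ → ℕ) (h : ∀ n, a (n + 1) = b n) :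
    series a = C ((a 0 : ℤ)) + w * series b := by
  have hw : w = X * u := rfl
  ext N
  cases N with
  | zero =>
    simp [series, coeff_zero_eq_constantCoeff, map_mul, w, u]
  | succ M =>
    rw [map_add, PowerSeries.coeff_C, if_neg (Nat.succ_ne_zero M), zero_add,
      hw, mul_assoc, coeff_succ_X_mul]
    rw [series, coeff_mk, Finset.sum_range_succ']
    have h0 : ((a 0 : ℤ)) * coeff (M + 1) (w ^ 0) = 0 := by
      simp [PowerSeries.coeff_one]
    rw [h0, add_zero]
    have hterm : ∀ n, (a (n + 1) : ℤ) * coeff (M + 1) (w ^ (n + 1))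
        = (b n : ℤ) * coeff M (u * w ^ n) := by
      intro n
      rw [h n, pow_succ', hw, mul_assoc, coeff_succ_X_mul]
    simp only [hterm]
    rw [PowerSeries.coeff_mul]
    have : ∀ p ∈ Finset.HasAntidiagonal.antidiagonal M, coeff p.1 u * coeff p.2 (series b)
        = coeff p.1 u * ∑ n ∈ range (M + 1), (b n : ℤ) * coeff p.2 (w ^ n) := by
      intro p hp
      rw [series, coeff_mk]
      congr 1
      apply Finset.sum_subset
      · intro x hx
        simp only [mem_range] at hx ⊢
        have : p.2 ≤ M := by
          have := Finset.HasAntidiagonal.antidiagonal.snd_le hp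
          omega
        omega
      · intro x _ hx
        simp only [mem_range, not_lt] at hx
        rw [coeff_w_pow_eq_zero (by omega), mul_zero]
    rw [Finset.sum_congr rfl this]
    simp only [Finset.mul_sum]
    rw [Finset.sum_comm]
    apply Finset.sum_congr rfl
    intro n _
    rw [PowerSeries.coeff_mul, Finset.mul_sum]
    apply Finset.sum_congr rfl
    intro p _
    ring

lemma series_add (x y : ℕ → ℕ) : series (fun n => x n + y n) = series x + series y := by
  ext N
  simp only [series, coeff_mk, map_add, ← Finset.sum_add_distrib]
  apply Finset.sum_congr rfl
  intro n _
  push_cast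
  ring

lemma series_sum {ι : Type*} (s : Finset ι) (f : ι → ℕ → ℕ) :
    series (fun n => ∑ j ∈ s, f j n) = ∑ j ∈ s, series (f j) := by
  classical
  induction s using Finset.induction_on with
  | empty => ext N; simp [series]
  | insert _ _ hnot ih =>
    rw [Finset.sum_insert hnot, ← ih, ← series_add]
    apply congrArg
    funext n
    rw [Finset.sum_insert hnot]

lemma alg_identity (t : ℕ) :
    (1 + X) ^ t * q = 1 + w * ((1 + X) ^ (t + 1) * q + ∑ j ∈ range t, (1 + X) ^ j * q) := by
  have hq : q = 1 + X + X ^ 2 := rfl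
  have hg : (∑ j ∈ range t, (1 + X : PowerSeries ℤ) ^ j) * X = (1 + X) ^ t - 1 := by
    have := geom_sum_mul (1 + X : PowerSeries ℤ) t
    simpa using this
  have key : X * ((1 + X) ^ (t + 1) * q + ∑ j ∈ range t, (1 + X : PowerSeries ℤ) ^ j * q)
      = q * ((1 + X) ^ t * q - 1) := by
    rw [← Finset.sum_mul]
    rw [hq]
    linear_combination (1 + X + X ^ 2 : PowerSeries ℤ) * hg
  have hw : w = X * u := rfl
  have hws : w * ((1 + X) ^ (t + 1) * q + ∑ j ∈ range t, (1 + X : PowerSeries ℤ) ^ j * q)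
      = (1 + X) ^ t * q - 1 := by
    calc w * ((1 + X) ^ (t + 1) * q + ∑ j ∈ range t, (1 + X : PowerSeries ℤ) ^ j * q)
        = u * (X * ((1 + X) ^ (t + 1) * q + ∑ j ∈ range t, (1 + X : PowerSeries ℤ) ^ j * q)) := by
          rw [hw]; ring
      _ = q * u * ((1 + X) ^ t * q - 1) := by rw [key]; ring
      _ = (1 + X) ^ t * q - 1 := by rw [q_mul_u]; ring
  rw [hws]
  ring

abbrev Pt (n : ℕ) (a : ℤ) : Type :=
  {p : Fin (n + 1) → ℤ // p 0 = a ∧ (∀ i, 0 ≤ p i) ∧ IsDeutschPath n p}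

lemma path_le {n : ℕ} (p : Fin (n + 1) → ℤ) (hD : IsDeutschPath n p) :
    ∀ i : Fin (n + 1), p i ≤ p 0 + i.val := by
  intro i
  induction i using Fin.induction with
  | zero => simp
  | succ j ihj =>
    have h := hD j
    simp only [Fin.coe_castSucc] at ihj
    simp only [Fin.val_succ]
    push_cast
    omega

instance PtFinite (n : ℕ) (a : ℤ) : Finite (Pt n a) := by
  have key : ∀ p : Pt n a, ∀ i, p.1 i ∈ Set.Icc (0 : ℤ) (a + n) := by
    rintro ⟨p, h0, hn, hD⟩ i
    show p i ∈ _
    refine ⟨hn i, ?_⟩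
    have h1 := path_le p hD i
    rw [h0] at h1
    have hi : (i.val : ℤ) ≤ n := by exact_mod_cast Nat.le_of_lt_succ i.isLt
    omega
  apply Finite.of_injective
    (fun p : Pt n a => (fun i => (⟨p.1 i, key p i⟩ : Set.Icc (0 : ℤ) (a + n))))
  intro p q h
  apply Subtype.ext
  funext i
  exact congrArg Subtype.val (congrFun h i)

lemma pc_zero (s : ℕ) : pathCountAnyEnd 0 (s : ℤ) = 1 := by
  rw [pathCountAnyEnd, Nat.card_eq_one_iff_unique]
  constructor
  · constructor
    rintro ⟨p, hp, -, -⟩ ⟨r, hr, -, -⟩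
    apply Subtype.ext
    funext i
    show p i = r i
    rw [Fin.eq_zero i, hp, hr]
  · exact ⟨⟨fun _ => s, rfl, fun i => by positivity, fun i => i.elim0⟩⟩

lemma deutsch_cons {n : ℕ} (a : ℤ) (p : Fin (n + 1) → ℤ) :
    IsDeutschPath (n + 1) (Fin.cons a p) ↔
      (p 0 - a = 1 ∨ p 0 - a ≤ -1) ∧ IsDeutschPath n p := by
  constructor
  · intro h
    refine ⟨?_, fun i => ?_⟩
    · have h0 := h 0
      simpa using h0
    · have hi := h i.succ
      simpa [← Fin.succ_castSucc] using hi
  · rintro ⟨h0, h⟩ i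
    induction i using Fin.cases with
    | zero => simpa using h0
    | succ j => have := h j; simpa [← Fin.succ_castSucc] using this

lemma deutsch_tail {n : ℕ} (p : Fin (n + 2) → ℤ) (h : IsDeutschPath (n + 1) p) :
    IsDeutschPath n (Fin.tail p) := by
  rw [← Fin.cons_self_tail p] at h
  exact ((deutsch_cons _ _).mp h).2

lemma deutsch_head {n : ℕ} (p : Fin (n + 2) → ℤ) (h : IsDeutschPath (n + 1) p) :
    p 1 - p 0 = 1 ∨ p 1 - p 0 ≤ -1 := by
  have h0 := h 0
  simpa using h0

def S (t : ℕ) : Finset ℤ := insert ((t : ℤ) + 1) ((range t).image (Nat.cast : ℕ → ℤ))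

lemma mem_S {t : ℕ} {b : ℤ} : b ∈ S t ↔ b = (t : ℤ) + 1 ∨ (0 ≤ b ∧ b < t) := by
  simp only [S, Finset.mem_insert, Finset.mem_image, Finset.mem_range]
  constructor
  · rintro (h | ⟨j, hj, rfl⟩)
    · exact Or.inl h
    · right; constructor <;> [positivity; exact_mod_cast hj]
  · rintro (h | ⟨h0, ht⟩)
    · exact Or.inl h
    · right; exact ⟨b.toNat, by omega, by omega⟩

lemma sigma_ext {t n : ℕ} {b b' : S t} {p : Pt n (b : ℤ)} {p' : Pt n (b' : ℤ)}
    (h : (b : ℤ) = (b' : ℤ)) (hp : p.1 = p'.1) :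
    (⟨b, p⟩ : Σ x : S t, Pt n (x : ℤ)) = ⟨b', p'⟩ := by
  have hb : b = b' := Subtype.ext h
  subst hb
  exact congrArg (Sigma.mk b) (Subtype.ext hp)

noncomputable def stepEquiv (n t : ℕ) : Pt (n + 1) (t : ℤ) ≃ Σ b : S t, Pt n (b : ℤ) where
  toFun p :=
    ⟨⟨p.1 1, by
      rw [mem_S]
      have hd := deutsch_head p.1 p.2.2.2
      have h0 := p.2.1
      have h1 := p.2.2.1 1
      omega⟩,
     ⟨Fin.tail p.1, by
        show p.1 (0 : Fin (n + 1)).succ = _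
        rw [Fin.succ_zero_eq_one],
      fun i => p.2.2.1 i.succ,
      deutsch_tail p.1 p.2.2.2⟩⟩
  invFun x :=
    ⟨Fin.cons (t : ℤ) x.2.1, by
      refine ⟨Fin.cons_zero _ _, fun i => ?_, ?_⟩
      · induction i using Fin.cases with
        | zero => simp
        | succ j => rw [Fin.cons_succ]; exact x.2.2.2.1 j
      · rw [deutsch_cons]
        refine ⟨?_, x.2.2.2.2⟩
        have hb := mem_S.mp x.1.2
        have h0 := x.2.2.1
        omega⟩
  left_inv p := by
    obtain ⟨pf, h0, hn, hD⟩ := p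
    apply Subtype.ext
    show Fin.cons (t : ℤ) (Fin.tail pf) = pf
    rw [← h0]
    exact Fin.cons_self_tail pf
  right_inv x := by
    obtain ⟨⟨b, hb⟩, pf, h0, hn, hD⟩ := x
    apply sigma_ext
    · show (Fin.cons (t : ℤ) pf : Fin (n + 2) → ℤ) 1 = b
      rw [show (1 : Fin (n + 2)) = (0 : Fin (n + 1)).succ from (Fin.succ_zero_eq_one).symm,
        Fin.cons_succ]
      exact h0
    · show Fin.tail (Fin.cons (t : ℤ) pf : Fin (n + 2) → ℤ) = pf
      exact Fin.tail_cons _ _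

lemma pc_rec (n t : ℕ) : pathCountAnyEnd (n + 1) (t : ℤ)
    = pathCountAnyEnd n ((t : ℤ) + 1) + ∑ j ∈ range t, pathCountAnyEnd n (j : ℤ) := by
  classical
  letI : ∀ b : S t, Fintype (Pt n (b : ℤ)) := fun b => Fintype.ofFinite _
  have h1 : pathCountAnyEnd (n + 1) (t : ℤ) = Nat.card (Σ b : S t, Pt n (b : ℤ)) :=
    Nat.card_congr (stepEquiv n t)
  rw [h1, Nat.card_eq_fintype_card, Fintype.card_sigma]
  have h2 : ∀ b : S t, Fintype.card (Pt n (b : ℤ)) = pathCountAnyEnd n (b : ℤ) := by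
    intro b
    rw [pathCountAnyEnd, Nat.card_eq_fintype_card]
  simp only [h2]
  rw [Finset.sum_coe_sort (S t) (fun b => pathCountAnyEnd n b)]
  have hnot : ((t : ℤ) + 1) ∉ (range t).image (Nat.cast : ℕ → ℤ) := by
    simp only [Finset.mem_image, Finset.mem_range, not_exists]
    intro j hj
    omega
  have hinj : ∀ x ∈ range t, ∀ y ∈ range t, (x : ℤ) = (y : ℤ) → x = y := by
    intro x _ y _ h
    exact_mod_cast h
  rw [S, Finset.sum_insert hnot, Finset.sum_image hinj]

theorem stmt9 (t : ℕ) :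
    (series fun n => pathCountAnyEnd n t) = (1 + X) ^ t * q := by
  set d : ℕ → PowerSeries ℤ :=
    fun s => (series fun n => pathCountAnyEnd n s) - (1 + X) ^ s * q with hd
  suffices h : ∀ s, d s = 0 by
    have := h t
    rw [hd] at this
    simp only [sub_eq_zero] at this
    exact this
  have hrec : ∀ s : ℕ, d s = w * (d (s + 1) + ∑ j ∈ range s, d j) := by
    intro s
    have h1 : (series fun n => pathCountAnyEnd n s)
        = C ((pathCountAnyEnd 0 (s : ℤ) : ℤ)) + w * series (fun n =>
          pathCountAnyEnd n ((s : ℤ) + 1) + ∑ j ∈ range s, pathCountAnyEnd n (j : ℤ)) := by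
      exact series_shift _ _ (fun n => pc_rec n s)
    rw [pc_zero, Nat.cast_one, map_one] at h1
    have h2 : series (fun n =>
          pathCountAnyEnd n ((s : ℤ) + 1) + ∑ j ∈ range s, pathCountAnyEnd n (j : ℤ))
        = (series fun n => pathCountAnyEnd n ((s : ℤ) + 1))
          + ∑ j ∈ range s, series (fun n => pathCountAnyEnd n (j : ℤ)) := by
      rw [series_add]
      rw [series_sum]
    have h3 := alg_identity s
    have hcast : ((s : ℤ) + 1) = ((s + 1 : ℕ) : ℤ) := by push_cast; ring
    rw [hd]
    simp only [hcast] at h1 h2 ⊢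
    rw [h1, h2, h3]
    rw [Finset.sum_sub_distrib]
    ring
  intro s
  ext N
  rw [map_zero]
  induction N using Nat.strong_induction_on generalizing s with
  | _ N ih =>
    rw [hrec s]
    have hw : w = X * u := rfl
    rw [hw, mul_assoc]
    cases N with
    | zero => simp
    | succ M =>
      rw [coeff_succ_X_mul, PowerSeries.coeff_mul]
      apply Finset.sum_eq_zero
      intro p hp
      have hp2 : p.2 ≤ M := Finset.HasAntidiagonal.antidiagonal.snd_le hp
      have hz : ∀ j : ℕ, coeff p.2 (d j) = 0 := fun j => ih p.2 (by omega) j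
      rw [map_add, hz, map_sum]
      rw [Finset.sum_eq_zero (fun j _ => hz j)]
      simp
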